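/- Let H be a digraph on n ≥ 2 vertices and let ℓ ≥ 1 be an integer. Then there exists a set W of at most ⌈2n(ln n)/ℓ⌉ vertices of H such that for every ordered pair of vertices (u,v) with a directed path from u to v in H and with shortest-path distance d_H(u,v) ≥ ℓ, some directed path from u to v in H contains a vertex of W. -/

import Mathlib

/-- There is a directed walk of length at most `k` from `u` to `v` in the digraph
with edge relation `E`. -/
def distLE {V : Type*} (E : V → V → Prop) : ℕ → V → V → Prop
  | 0 => fun u v => u = v
  | n + 1 => fun u v => u = v ∨ ∃ w, E u w ∧ distLE E n w v

/-- `H` is a `k`-transitive-closure-spanner of the digraph `E`: every edge of `H` is an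
edge of the transitive closure of `E`, and whenever `E` has a directed path from `u` to `v`,
`H` has one of length at most `k`. -/
def IsTCSpanner {V : Type*} (E H : V → V → Prop) (k : ℕ) : Prop :=
  (∀ u v, H u v → u ≠ v ∧ Relation.TransGen E u v) ∧
  (∀ u v, Relation.ReflTransGen E u v → distLE H k u v)

lemma distLE_succ {V : Type*} (E : V → V → Prop) {k : ℕ} {u v : V}
    (h : distLE E k u v) : distLE E (k+1) u v := by
  induction k generalizing u with
  | zero => exact Or.inl h
  | succ k ih =>
    rcases h with rfl | ⟨w, hw, h'⟩
    · exact Or.inl rfl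
    · exact Or.inr ⟨w, hw, ih h'⟩

lemma distLE_mono {V : Type*} (E : V → V → Prop) {k k' : ℕ} (h : k ≤ k') {u v : V}
    (hd : distLE E k u v) : distLE E k' u v := by
  induction h with
  | refl => exact hd
  | step _ ih => exact distLE_succ E ih

lemma reflTransGen_of_distLE {V : Type*} (E : V → V → Prop) {k : ℕ} {u v : V}
    (h : distLE E k u v) : Relation.ReflTransGen E u v := by
  induction k generalizing u with
  | zero => exact h ▸ Relation.ReflTransGen.refl
  | succ k ih =>
    rcases h with rfl | ⟨w, hw, h'⟩
    · exact Relation.ReflTransGen.refl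
    · exact Relation.ReflTransGen.head hw (ih h')

lemma distLE_tail {V : Type*} (E : V → V → Prop) {k : ℕ} {u w v : V}
    (h : distLE E k u w) (e : E w v) : distLE E (k+1) u v := by
  induction k generalizing u with
  | zero => exact h ▸ Or.inr ⟨v, e, rfl⟩
  | succ k ih =>
    rcases h with rfl | ⟨x, hx, h'⟩
    · exact Or.inr ⟨v, e, distLE_mono E (Nat.zero_le (k+1)) rfl⟩
    · exact Or.inr ⟨x, hx, ih h'⟩

lemma exists_distLE {V : Type*} (E : V → V → Prop) {u v : V}
    (h : Relation.ReflTransGen E u v) : ∃ k, distLE E k u v := by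
  induction h with
  | refl => exact ⟨0, rfl⟩
  | tail _ e ih => obtain ⟨k, hk⟩ := ih; exact ⟨k+1, distLE_tail E hk e⟩

lemma key_step {V : Type*} (E : V → V → Prop) {u v : V} {D : ℕ}
    (hD : distLE E D u v) (hDmin : ∀ j < D, ¬ distLE E j u v) :
    ∀ i ≤ D, ∃ x, Relation.ReflTransGen E u x ∧ distLE E (D - i) x v ∧
      ∀ j < D - i, ¬ distLE E j x v := by
  intro i
  induction i with
  | zero => exact fun _ => ⟨u, Relation.ReflTransGen.refl, hD, hDmin⟩
  | succ i ih =>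
    intro hi
    obtain ⟨x, hux, hx, hxmin⟩ := ih (Nat.le_of_succ_le hi)
    have hDi : D - i = (D - (i+1)) + 1 := by omega
    rw [hDi] at hx hxmin
    simp only [distLE] at hx
    rcases hx with rfl | ⟨w, hxw, hw⟩
    · exact absurd (show distLE E 0 x x from rfl) (hxmin 0 (by omega))
    · refine ⟨w, hux.tail hxw, hw, fun j hj hjw => ?_⟩
      exact hxmin (j+1) (by omega) (Or.inr ⟨w, hxw, hjw⟩)

open Classical in
lemma card_interval {V : Type} [Fintype V] (E : V → V → Prop) (ℓ : ℕ) (hℓ : 1 ≤ ℓ)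
    (u v : V) (h : Relation.ReflTransGen E u v) (hbad : ¬ distLE E (ℓ-1) u v) :
    ℓ ≤ (Finset.univ.filter
      (fun x => Relation.ReflTransGen E u x ∧ Relation.ReflTransGen E x v)).card := by
  classical
  have hex := exists_distLE E h
  set D := Nat.find hex with hDdef
  have hD : distLE E D u v := Nat.find_spec hex
  have hDmin : ∀ j < D, ¬ distLE E j u v := fun j hj => Nat.find_min hex hj
  have hℓD : ℓ ≤ D := by
    by_contra hc
    exact hbad (distLE_mono E (by omega) hD)
  have key := key_step E hD hDmin
  set f : ℕ → V := fun i => if hi : i ≤ D then (key i hi).choose else u with hf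
  have hfprop : ∀ i ≤ D, Relation.ReflTransGen E u (f i) ∧ distLE E (D - i) (f i) v ∧
      ∀ j < D - i, ¬ distLE E j (f i) v := by
    intro i hi
    simp only [hf, dif_pos hi]
    exact (key i hi).choose_spec
  have hinj : Set.InjOn f (Finset.range (D+1)) := by
    intro i hi j hj hij
    simp only [Finset.coe_range, Set.mem_Iio] at hi hj
    by_contra hne
    rcases Nat.lt_or_ge (D - i) (D - j) with hlt | hge
    · exact (hfprop j (by omega)).2.2 (D - i) hlt (hij ▸ (hfprop i (by omega)).2.1)
    · have hlt : D - j < D - i := by omega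
      exact (hfprop i (by omega)).2.2 (D - j) hlt (hij ▸ (hfprop j (by omega)).2.1)
  have hmaps : ∀ i ∈ Finset.range (D+1), f i ∈ Finset.univ.filter
      (fun x => Relation.ReflTransGen E u x ∧ Relation.ReflTransGen E x v) := by
    intro i hi
    rw [Finset.mem_range] at hi
    obtain ⟨h1, h2, _⟩ := hfprop i (by omega)
    exact Finset.mem_filter.mpr ⟨Finset.mem_univ _, h1, reflTransGen_of_distLE E h2⟩
  have := Finset.card_le_card_of_injOn f hmaps hinj
  rw [Finset.card_range] at this
  omega

lemma hitting {V ι : Type} [Fintype V] [DecidableEq V] [DecidableEq ι]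
    (n : ℕ) (hn : n = Fintype.card V) (hnpos : 0 < n) (ℓ : ℕ)
    (f : ι → Finset V) :
    ∀ (t : ℕ) (F : Finset ι), (∀ i ∈ F, ℓ ≤ (f i).card) →
      F.card * (n - ℓ)^t < n^t →
      ∃ W : Finset V, W.card ≤ t ∧ ∀ i ∈ F, ∃ x ∈ W, x ∈ f i := by
  haveI : Nonempty V := Fintype.card_pos_iff.mp (hn ▸ hnpos)
  intro t
  induction t with
  | zero =>
    intro F _ hb
    simp only [pow_zero, mul_one] at hb
    have hF : F = ∅ := Finset.card_eq_zero.mp (by omega)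
    exact ⟨∅, le_refl _, fun i hi => absurd (hF ▸ hi) (Finset.notMem_empty i)⟩
  | succ t ih =>
    intro F hcard hb
    rcases F.eq_empty_or_nonempty with rfl | hne
    · exact ⟨∅, Nat.zero_le _, fun i hi => absurd hi (Finset.notMem_empty i)⟩
    have hsum : ℓ * F.card ≤ ∑ x : V, (F.filter (fun i => x ∈ f i)).card := by
      have h1 : ∑ x : V, (F.filter (fun i => x ∈ f i)).card
          = ∑ i ∈ F, (f i).card := by
        simp only [Finset.card_filter]
        rw [Finset.sum_comm]
        refine Finset.sum_congr rfl fun i _ => ?_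
        rw [← Finset.card_filter, Finset.filter_univ_mem]
      rw [h1]
      calc ℓ * F.card = ∑ _i ∈ F, ℓ := by rw [Finset.sum_const, smul_eq_mul, mul_comm]
        _ ≤ ∑ i ∈ F, (f i).card := Finset.sum_le_sum hcard
    obtain ⟨x, hx⟩ : ∃ x : V, ℓ * F.card ≤ n * (F.filter (fun i => x ∈ f i)).card := by
      by_contra hcon
      push_neg at hcon
      have h2 : ∑ x : V, n * (F.filter (fun i => x ∈ f i)).card
          < ∑ _x : V, ℓ * F.card :=
        Finset.sum_lt_sum_of_nonempty Finset.univ_nonempty (fun x _ => hcon x)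
      rw [← Finset.mul_sum, Finset.sum_const, smul_eq_mul,
        Finset.card_univ, ← hn] at h2
      exact absurd (lt_of_le_of_lt (Nat.mul_le_mul_left n hsum) h2) (lt_irrefl _)
    set c := (F.filter (fun i => x ∈ f i)).card with hc
    set F' := F.filter (fun i => x ∉ f i) with hF'
    have hsplit : c + F'.card = F.card := by
      rw [hc, hF']
      exact Finset.card_filter_add_card_filter_not (p := fun i => x ∈ f i)
    have hbound : n * F'.card ≤ (n - ℓ) * F.card := by
      have h1 : n * c + n * F'.card = n * F.card := by rw [← Nat.mul_add, hsplit]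
      have h2 : (n - ℓ) * F.card = n * F.card - ℓ * F.card := Nat.sub_mul n ℓ F.card
      omega
    have hb' : F'.card * (n - ℓ)^t < n^t := by
      have h1 : n * (F'.card * (n - ℓ)^t) ≤ F.card * (n-ℓ)^(t+1) := by
        calc n * (F'.card * (n - ℓ)^t) = (n * F'.card) * (n-ℓ)^t := by ring
          _ ≤ ((n-ℓ) * F.card) * (n-ℓ)^t := Nat.mul_le_mul_right _ hbound
          _ = F.card * (n-ℓ)^(t+1) := by ring
      have h2 : F.card * (n-ℓ)^(t+1) < n * n^t := by rw [← pow_succ']; exact hb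
      exact Nat.lt_of_mul_lt_mul_left (lt_of_le_of_lt h1 h2)
    obtain ⟨W', hW'card, hW'⟩ := ih F' (fun i hi => hcard i (Finset.mem_filter.mp hi).1) hb'
    refine ⟨insert x W', le_trans (Finset.card_insert_le _ _) (by omega), fun i hi => ?_⟩
    by_cases hxi : x ∈ f i
    · exact ⟨x, Finset.mem_insert_self _ _, hxi⟩
    · obtain ⟨y, hy, hyf⟩ := hW' i (Finset.mem_filter.mpr ⟨hi, hxi⟩)
      exact ⟨y, Finset.mem_insert_of_mem hy, hyf⟩

lemma ceil_pos_bound (n ℓ : ℕ) (hn2 : 2 ≤ n) (hℓ : 1 ≤ ℓ) :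
    1 ≤ ⌈(2 * (n:ℝ) * Real.log n) / ℓ⌉₊ := by
  have hlog : 0 < Real.log n := Real.log_pos (by exact_mod_cast hn2)
  have : 0 < (2 * (n:ℝ) * Real.log n) / ℓ := by positivity
  exact Nat.one_le_iff_ne_zero.mpr (by positivity)

lemma analytic (n ℓ : ℕ) (hn2 : 2 ≤ n) (hℓ : 1 ≤ ℓ) (hln : ℓ < n) :
    n^2 * (n - ℓ)^(⌈(2 * (n:ℝ) * Real.log n) / ℓ⌉₊) < n^(⌈(2 * (n:ℝ) * Real.log n) / ℓ⌉₊) := by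
  set t := ⌈(2 * (n:ℝ) * Real.log n) / ℓ⌉₊ with htdef
  have hlog : 0 < Real.log n := Real.log_pos (by exact_mod_cast hn2)
  have hnpos : (0:ℝ) < n := by positivity
  have hℓpos : (0:ℝ) < ℓ := by exact_mod_cast hℓ
  have ht1 : 1 ≤ t := ceil_pos_bound n ℓ hn2 hℓ
  have ht : (2 * (n:ℝ) * Real.log n) / ℓ ≤ t := Nat.le_ceil _
  set a : ℝ := (ℓ:ℝ) / n with ha
  have hapos : 0 < a := by positivity
  have ha1 : a < 1 := by
    rw [ha, div_lt_one hnpos]; exact_mod_cast hln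
  have h1 : (1 - a) < Real.exp (-a) := by
    have := Real.add_one_lt_exp (x := -a) (by linarith)
    linarith
  have h2 : (1 - a)^t < (Real.exp (-a))^t := by
    apply pow_lt_pow_left₀ h1 (by linarith) (by omega)
  have h3 : (Real.exp (-a))^t = Real.exp (-(a * t)) := by
    rw [← Real.exp_nat_mul]; ring_nf
  have h4 : Real.exp (-(a * t)) ≤ Real.exp (-(2 * Real.log n)) := by
    apply Real.exp_le_exp.mpr
    have : 2 * Real.log n ≤ a * t := by
      rw [ha]
      rw [div_le_iff₀ hℓpos] at ht
      rw [div_mul_eq_mul_div, le_div_iff₀ hnpos]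
      calc 2 * Real.log n * n = 2 * n * Real.log n := by ring
        _ ≤ t * ℓ := ht
        _ = ℓ * t := by ring
    linarith
  have h5 : Real.exp (-(2 * Real.log n)) = ((n:ℝ)^2)⁻¹ := by
    rw [Real.exp_neg]
    congr 1
    rw [show (2:ℝ) * Real.log n = ((2:ℕ):ℝ) * Real.log n by norm_num, Real.exp_nat_mul,
      Real.exp_log hnpos]
  have key : (1 - a)^t < ((n:ℝ)^2)⁻¹ := by
    calc (1 - a)^t < (Real.exp (-a))^t := h2
      _ = Real.exp (-(a*t)) := h3
      _ ≤ Real.exp (-(2 * Real.log n)) := h4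
      _ = ((n:ℝ)^2)⁻¹ := h5
  have hsub : ((n - ℓ : ℕ) : ℝ) = (n:ℝ) - ℓ := by
    rw [Nat.cast_sub (le_of_lt hln)]
  have h1a : ((n:ℝ) - ℓ) = (1 - a) * n := by
    rw [ha]; field_simp
  have hfinal : ((n:ℝ))^2 * ((n:ℝ) - ℓ)^t < (n:ℝ)^t := by
    rw [h1a, mul_pow]
    calc (n:ℝ)^2 * ((1-a)^t * (n:ℝ)^t) = ((n:ℝ)^2 * (1-a)^t) * (n:ℝ)^t := by ring
      _ < ((n:ℝ)^2 * ((n:ℝ)^2)⁻¹) * (n:ℝ)^t := by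
          apply mul_lt_mul_of_pos_right _ (by positivity)
          exact mul_lt_mul_of_pos_left key (by positivity)
      _ = (n:ℝ)^t := by
          rw [mul_inv_cancel₀ (by positivity), one_mul]
  have : ((n^2 * (n-ℓ)^t : ℕ) : ℝ) < ((n^t : ℕ) : ℝ) := by
    push_cast [hsub]
    push_cast at hfinal
    convert hfinal using 2
  exact_mod_cast this

/-- In any digraph `H` on `n ≥ 2` vertices there is a set `W` of at most `⌈2n(ln n)/ℓ⌉`
vertices such that every ordered pair `(u,v)` joined by a directed path but at distance at
least `ℓ` has some directed path from `u` to `v` passing through a vertex of `W`. -/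
theorem stmt4 {V : Type} [Fintype V] (E : V → V → Prop)
    (n : ℕ) (hn : n = Fintype.card V) (hn2 : 2 ≤ n)
    (ℓ : ℕ) (hℓ : 1 ≤ ℓ) :
    ∃ W : Set V, W.ncard ≤ ⌈(2 * n * Real.log n) / ℓ⌉₊ ∧
      ∀ u v : V, Relation.ReflTransGen E u v → ¬ distLE E (ℓ - 1) u v →
        ∃ w ∈ W, Relation.ReflTransGen E u w ∧ Relation.ReflTransGen E w v := by
  classical
  set t := ⌈(2 * (n:ℝ) * Real.log n) / ℓ⌉₊ with htdef
  have ht1 : 1 ≤ t := ceil_pos_bound n ℓ hn2 hℓ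
  set S : V × V → Finset V := fun p => Finset.univ.filter
    (fun x => Relation.ReflTransGen E p.1 x ∧ Relation.ReflTransGen E x p.2) with hS
  set F : Finset (V × V) := Finset.univ.filter
    (fun p => Relation.ReflTransGen E p.1 p.2 ∧ ¬ distLE E (ℓ-1) p.1 p.2) with hF
  have hScard : ∀ p ∈ F, ℓ ≤ (S p).card := by
    intro p hp
    rw [hF, Finset.mem_filter] at hp
    exact card_interval E ℓ hℓ p.1 p.2 hp.2.1 hp.2.2
  have hFcard : F.card ≤ n^2 := by
    calc F.card ≤ (Finset.univ : Finset (V × V)).card := Finset.card_filter_le _ _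
      _ = n^2 := by rw [Finset.card_univ, Fintype.card_prod, ← hn]; ring
  have hb : F.card * (n - ℓ)^t < n^t := by
    rcases Nat.lt_or_ge ℓ n with hln | hln
    · calc F.card * (n - ℓ)^t ≤ n^2 * (n - ℓ)^t := Nat.mul_le_mul_right _ hFcard
        _ < n^t := analytic n ℓ hn2 hℓ hln
    · have : n - ℓ = 0 := by omega
      rw [this, zero_pow (by omega), Nat.mul_zero]
      exact Nat.pow_pos (by omega)
  obtain ⟨W, hWcard, hW⟩ := hitting n hn (by omega) ℓ S t F hScard hb
  refine ⟨(W : Set V), ?_, ?_⟩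
  · rw [Set.ncard_coe_finset]
    exact_mod_cast hWcard
  · intro u v huv hbad
    have hmem : (u, v) ∈ F := by
      rw [hF, Finset.mem_filter]
      exact ⟨Finset.mem_univ _, huv, hbad⟩
    obtain ⟨x, hxW, hxS⟩ := hW (u, v) hmem
    rw [hS, Finset.mem_filter] at hxS
    exact ⟨x, hxW, hxS.2⟩
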